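/- (Blokhuis–Lavrauw bound) A scattered 𝔽_q-linear set of PG(r-1, q^n) has rank at most rn/2. Equivalently, if U is an 𝔽_q-subspace of an r-dimensional 𝔽_{q^n}-vector space V such that dim_{𝔽_q}(U ∩ ⟨v⟩_{𝔽_{q^n}}) ≤ 1 for every nonzero v ∈ V, then dim_{𝔽_q} U ≤ rn/2. -/

import Mathlib

open Module Finset

lemma ann_count {K V : Type*} [Field K] [Fintype K] [AddCommGroup V] [Module K V]
    [FiniteDimensional K V] [Fintype (Module.Dual K V)] (W : Submodule K V)
    [DecidablePred fun φ : Module.Dual K V => ∀ w ∈ W, φ w = 0] :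
    (Finset.univ.filter (fun φ : Module.Dual K V => ∀ w ∈ W, φ w = 0)).card
      = Fintype.card K ^ (Module.finrank K V - Module.finrank K W) := by
  classical
  have h1 : (Finset.univ.filter (fun φ : Module.Dual K V => ∀ w ∈ W, φ w = 0)).card
      = Fintype.card ↥(W.dualAnnihilator) := by
    rw [← Fintype.card_subtype]
    exact Fintype.card_congr (Equiv.subtypeEquivRight
      (fun φ => (Submodule.mem_dualAnnihilator φ))).symm
  have h2 : Fintype.card ↥(W.dualAnnihilator) = Fintype.card K ^ finrank K ↥(W.dualAnnihilator) :=
    by convert Module.card_eq_pow_finrank (K := K) (V := ↥(W.dualAnnihilator))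
  have h3 : finrank K ↥W + finrank K ↥(W.dualAnnihilator) = finrank K V := by
    have h4 := LinearMap.finrank_range_add_finrank_ker (W.dualRestrict)
    rw [Submodule.dualRestrict_ker_eq_dualAnnihilator] at h4
    rw [LinearMap.range_eq_top.mpr (Subspace.dualRestrict_surjective)] at h4
    rw [finrank_top, Subspace.dual_finrank_eq, Subspace.dual_finrank_eq] at h4
    exact h4
  rw [h1, h2]
  congr 1
  omega

/-- (Blokhuis–Lavrauw bound) If `U` is a scattered `𝔽_q`-subspace of an `r`-dimensional
`𝔽_{q^n}`-vector space `V`, then `dim_{𝔽_q} U ≤ rn/2`. -/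
theorem stmt_7 (q n : ℕ) (hq : IsPrimePow q) (hn : 2 ≤ n)
    (Fq K V : Type*) [Field Fq] [Field K] [Algebra Fq K]
    [Fintype Fq] [Fintype K]
    (hcard_q : Fintype.card Fq = q) (hcard_K : Fintype.card K = q ^ n)
    [AddCommGroup V] [Module K V] [Module Fq V] [IsScalarTower Fq K V]
    [FiniteDimensional K V]
    (U : Submodule Fq V)
    (hscat : ∀ v : V, v ≠ 0 →
      Module.finrank Fq ↥(U ⊓ (Submodule.span K {v}).restrictScalars Fq) ≤ 1) :
    2 * Module.finrank Fq U ≤ Module.finrank K V * n := by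
  classical
  have hq2 : 2 ≤ q := hq.two_le
  haveI : FiniteDimensional Fq V := FiniteDimensional.trans Fq K V
  haveI : Finite V := Module.finite_of_finite K
  letI : Fintype V := Fintype.ofFinite V
  haveI : Finite (Module.Dual K V) := Module.finite_of_finite K
  letI : Fintype (Module.Dual K V) := Fintype.ofFinite _
  letI : Fintype ↥U := Fintype.ofFinite _
  by_cases hk0 : finrank Fq ↥U = 0
  · rw [hk0]; omega
  have hUnt : Nontrivial ↥U := by
    rw [← Module.finrank_pos_iff (R := Fq)]
    omega
  set k := finrank Fq ↥U with hkdef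
  have hk1 : 1 ≤ k := Nat.one_le_iff_ne_zero.mpr hk0
  obtain ⟨u₀, hu₀⟩ := exists_ne (0 : ↥U)
  have hu₀' : (u₀ : V) ≠ 0 := by simpa using hu₀
  obtain hr0 | hr1 | hr2 : finrank K V = 0 ∨ finrank K V = 1 ∨ 2 ≤ finrank K V := by omega
  · -- V trivial : contradiction with nonzero u₀
    have : Subsingleton V := finrank_zero_iff.mp hr0
    exact absurd (Subsingleton.elim (u₀ : V) 0) hu₀'
  · -- one-dimensional case
    have hspan : Submodule.span K {(u₀ : V)} = ⊤ := by
      apply Submodule.eq_top_of_finrank_eq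
      rw [finrank_span_singleton hu₀', hr1]
    have hle := hscat (u₀ : V) hu₀'
    rw [hspan] at hle
    have : U ⊓ (⊤ : Submodule K V).restrictScalars Fq = U := by
      simp
    rw [this] at hle
    rw [hr1, one_mul]
    omega
  -- main case: r = s + 2
  obtain ⟨s, hs⟩ : ∃ s, finrank K V = s + 2 := ⟨finrank K V - 2, by omega⟩
  have hnK : finrank Fq K = n := by
    have h := card_eq_pow_finrank (K := Fq) (V := K)
    rw [hcard_q, hcard_K] at h
    exact (Nat.pow_right_injective hq2 h.symm)
  have hcardU : Fintype.card ↥U = q ^ k := by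
    rw [card_eq_pow_finrank (K := Fq) (V := ↥U), hcard_q]
  have hcardDual : Fintype.card (Module.Dual K V) = q ^ (n * (s + 2)) := by
    rw [card_eq_pow_finrank (K := K) (V := Module.Dual K V), hcard_K,
      Subspace.dual_finrank_eq, hs, ← pow_mul]
  -- the counting function
  set m : Module.Dual K V → ℕ := fun φ => (univ.filter fun u : ↥U => φ ↑u = 0).card with hm
  -- pointwise structure of m
  have hpt : ∀ φ : Module.Dual K V, ∃ x : ℕ, m φ = q ^ x ∧ k ≤ n + x := by
    intro φ
    set L : ↥U →ₗ[Fq] K := (φ.restrictScalars Fq).comp U.subtype with hL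
    refine ⟨finrank Fq ↥(LinearMap.ker L), ?_, ?_⟩
    · have h1 : m φ = Fintype.card ↥(LinearMap.ker L) := by
        simp only [hm]
        rw [← Fintype.card_subtype]
        apply Fintype.card_congr
        apply Equiv.subtypeEquivRight
        intro u
        simp [hL, LinearMap.mem_ker]
      rw [h1, card_eq_pow_finrank (K := Fq), hcard_q]
    · have h4 := LinearMap.finrank_range_add_finrank_ker L
      have h5 : finrank Fq ↥(LinearMap.range L) ≤ n := hnK ▸ (Submodule.finrank_le _)
      omega
  -- count of functionals vanishing at a nonzero vector
  have hcnt_single : ∀ v : V, v ≠ 0 →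
      (univ.filter fun φ : Module.Dual K V => φ v = 0).card = q ^ (n * (s + 1)) := by
    intro v hv
    have e : (univ.filter fun φ : Module.Dual K V => φ v = 0)
        = (univ.filter fun φ : Module.Dual K V => ∀ w ∈ Submodule.span K {v}, φ w = 0) := by
      apply Finset.filter_congr
      intro φ _
      constructor
      · intro h w hw
        obtain ⟨c, rfl⟩ := Submodule.mem_span_singleton.mp hw
        simp [h]
      · intro h
        exact h v (Submodule.mem_span_singleton_self v)
    rw [e, ann_count, hcard_K, finrank_span_singleton hv, hs]
    rw [show s + 2 - 1 = s + 1 from rfl, ← pow_mul]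
  -- count of functionals vanishing at two independent vectors
  have hcnt_pair : ∀ v w : V, v ≠ 0 → w ∉ Submodule.span K {v} →
      (univ.filter fun φ : Module.Dual K V => φ v = 0 ∧ φ w = 0).card = q ^ (n * s) := by
    intro v w hv hw
    have hw0 : w ≠ 0 := fun h => hw (h ▸ Submodule.zero_mem _)
    have hrank : finrank K ↥(Submodule.span K ({v, w} : Set V)) = 2 := by
      have hlt : Submodule.span K {v} < Submodule.span K ({v, w} : Set V) := by
        refine lt_of_le_of_ne (Submodule.span_mono (by simp)) (fun hEq => hw ?_)
        rw [hEq]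
        exact Submodule.subset_span (by simp)
      have h1 : 1 < finrank K ↥(Submodule.span K ({v, w} : Set V)) := by
        have := Submodule.finrank_lt_finrank_of_lt hlt
        rwa [finrank_span_singleton hv] at this
      have h2 : finrank K ↥(Submodule.span K ({v, w} : Set V)) ≤ 2 := by
        rw [show ({v, w} : Set V) = insert v {w} from rfl, Submodule.span_insert]
        refine le_trans (Submodule.finrank_add_le_finrank_add_finrank _ _) ?_
        rw [finrank_span_singleton hv, finrank_span_singleton hw0]
      omega
    have e : (univ.filter fun φ : Module.Dual K V => φ v = 0 ∧ φ w = 0)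
        = (univ.filter fun φ : Module.Dual K V =>
            ∀ x ∈ Submodule.span K ({v, w} : Set V), φ x = 0) := by
      apply Finset.filter_congr
      intro φ _
      constructor
      · rintro ⟨h1, h2⟩ x hx
        obtain ⟨a, b, rfl⟩ := Submodule.mem_span_pair.mp hx
        simp [h1, h2]
      · intro h
        exact ⟨h v (Submodule.subset_span (by simp)), h w (Submodule.subset_span (by simp))⟩
    rw [e, ann_count, hcard_K, hrank, hs]
    rw [show s + 2 - 2 = s from rfl, ← pow_mul]
  -- scatteredness: each K-line through a nonzero point of U meets U in exactly q vectors
  have hUline : ∀ u : ↥U, (u : V) ≠ 0 →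
      (univ.filter fun v : ↥U => (v : V) ∈ Submodule.span K {(u : V)}).card = q := by
    intro u hu
    have h1 : (univ.filter fun v : ↥U => (v : V) ∈ Submodule.span K {(u : V)}).card
        = Fintype.card ↥(U ⊓ (Submodule.span K {(u : V)}).restrictScalars Fq) := by
      rw [← Fintype.card_subtype]
      refine Fintype.card_congr ?_
      refine
        { toFun := fun v => ⟨((v : ↥U) : V), Submodule.mem_inf.mpr ⟨(v : ↥U).2, v.2⟩⟩
          invFun := fun x => ⟨⟨(x : V), (Submodule.mem_inf.mp x.2).1⟩,
            (Submodule.mem_inf.mp x.2).2⟩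
          left_inv := fun v => rfl
          right_inv := fun x => rfl }
    have hpos : 0 < finrank Fq ↥(U ⊓ (Submodule.span K {(u : V)}).restrictScalars Fq) := by
      rw [Module.finrank_pos_iff (R := Fq)]
      refine ⟨⟨⟨(u : V), Submodule.mem_inf.mpr ⟨u.2, Submodule.mem_span_singleton_self _⟩⟩, 0, ?_⟩⟩
      intro hEq
      exact hu (congrArg Subtype.val hEq)
    have hle := hscat (u : V) hu
    have h2 : finrank Fq ↥(U ⊓ (Submodule.span K {(u : V)}).restrictScalars Fq) = 1 := by omega
    rw [h1, card_eq_pow_finrank (K := Fq), hcard_q, h2, pow_one]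
  -- first moment
  have hS1' : (∑ v : ↥U, (univ.filter fun φ : Module.Dual K V => φ ↑v = 0).card)
      = q ^ (n * (s + 2)) + (q ^ k - 1) * q ^ (n * (s + 1)) := by
    rw [← Finset.sum_erase_add _ _ (mem_univ (0 : ↥U))]
    have hz : (univ.filter fun φ : Module.Dual K V => φ ↑(0 : ↥U) = 0).card
        = q ^ (n * (s + 2)) := by
      rw [← hcardDual, ← Finset.card_univ]
      congr 1
      apply Finset.filter_true_of_mem
      intro φ _
      simp
    have hother : ∀ v ∈ univ.erase (0 : ↥U),
        (univ.filter fun φ : Module.Dual K V => φ ↑v = 0).card = q ^ (n * (s + 1)) := by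
      intro v hv
      refine hcnt_single (↑v) ?_
      simpa using (Finset.mem_erase.mp hv).1
    rw [Finset.sum_congr rfl hother, Finset.sum_const, smul_eq_mul,
      Finset.card_erase_of_mem (mem_univ _), Finset.card_univ, hcardU, hz, add_comm]
  have hS1 : (∑ φ : Module.Dual K V, m φ)
      = q ^ (n * (s + 2)) + (q ^ k - 1) * q ^ (n * (s + 1)) := by
    rw [← hS1']
    simp only [hm, Finset.card_filter]
    rw [Finset.sum_comm]
  -- second moment
  have hsq : ∀ φ : Module.Dual K V, m φ * m φ
      = ∑ u : ↥U, ∑ v : ↥U, if φ ↑u = 0 ∧ φ ↑v = 0 then 1 else 0 := by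
    intro φ
    simp only [hm, Finset.card_filter]
    rw [Finset.sum_mul_sum]
    refine Finset.sum_congr rfl fun u _ => Finset.sum_congr rfl fun v _ => ?_
    by_cases h1 : φ ↑u = 0 <;> by_cases h2 : φ ↑v = 0 <;> simp [h1, h2]
  have hinner0 : (∑ v : ↥U, (univ.filter fun φ : Module.Dual K V =>
        φ ↑(0 : ↥U) = 0 ∧ φ ↑v = 0).card)
      = q ^ (n * (s + 2)) + (q ^ k - 1) * q ^ (n * (s + 1)) := by
    rw [← hS1']
    refine Finset.sum_congr rfl fun v _ => ?_
    congr 1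
    apply Finset.filter_congr
    intro φ _
    simp
  have hinner1 : ∀ u : ↥U, (u : V) ≠ 0 →
      (∑ v : ↥U, (univ.filter fun φ : Module.Dual K V => φ ↑u = 0 ∧ φ ↑v = 0).card)
      = q * q ^ (n * (s + 1)) + (q ^ k - q) * q ^ (n * s) := by
    intro u hu
    rw [← Finset.sum_filter_add_sum_filter_not univ
      (fun v : ↥U => (v : V) ∈ Submodule.span K {(u : V)})]
    have hA : ∀ v ∈ univ.filter (fun v : ↥U => (v : V) ∈ Submodule.span K {(u : V)}),
        (univ.filter fun φ : Module.Dual K V => φ ↑u = 0 ∧ φ ↑v = 0).card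
          = q ^ (n * (s + 1)) := by
      intro v hv
      obtain ⟨c, hc⟩ := Submodule.mem_span_singleton.mp (Finset.mem_filter.mp hv).2
      have e : (univ.filter fun φ : Module.Dual K V => φ ↑u = 0 ∧ φ ↑v = 0)
          = (univ.filter fun φ : Module.Dual K V => φ ↑u = 0) := by
        apply Finset.filter_congr
        intro φ _
        constructor
        · exact fun h => h.1
        · intro h
          refine ⟨h, ?_⟩
          rw [← hc]
          simp [h]
      rw [e]
      exact hcnt_single _ hu
    have hB : ∀ v ∈ univ.filter (fun v : ↥U => ¬ (v : V) ∈ Submodule.span K {(u : V)}),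
        (univ.filter fun φ : Module.Dual K V => φ ↑u = 0 ∧ φ ↑v = 0).card = q ^ (n * s) := by
      intro v hv
      exact hcnt_pair _ _ hu (Finset.mem_filter.mp hv).2
    have hcards := Finset.card_filter_add_card_filter_not
      (s := (univ : Finset ↥U)) (p := fun v : ↥U => (v : V) ∈ Submodule.span K {(u : V)})
    rw [Finset.card_univ, hcardU, hUline u hu] at hcards
    rw [Finset.sum_congr rfl hA, Finset.sum_congr rfl hB, Finset.sum_const, Finset.sum_const,
      smul_eq_mul, smul_eq_mul, hUline u hu]
    congr 1
    rw [show (univ.filter fun v : ↥U => ¬ (v : V) ∈ Submodule.span K {(u : V)}).card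
      = q ^ k - q by omega]
  have hS2 : (∑ φ : Module.Dual K V, m φ * m φ)
      = (q ^ (n * (s + 2)) + (q ^ k - 1) * q ^ (n * (s + 1)))
        + (q ^ k - 1) * (q * q ^ (n * (s + 1)) + (q ^ k - q) * q ^ (n * s)) := by
    have swap2 : (∑ φ : Module.Dual K V, m φ * m φ)
        = ∑ u : ↥U, ∑ v : ↥U,
            (univ.filter fun φ : Module.Dual K V => φ ↑u = 0 ∧ φ ↑v = 0).card := by
      rw [Finset.sum_congr rfl fun φ _ => hsq φ]
      simp only [Finset.card_filter]
      rw [Finset.sum_comm]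
      refine Finset.sum_congr rfl fun u _ => ?_
      rw [Finset.sum_comm]
    rw [swap2, ← Finset.sum_erase_add _ _ (mem_univ (0 : ↥U))]
    have hother : ∀ u ∈ univ.erase (0 : ↥U),
        (∑ v : ↥U, (univ.filter fun φ : Module.Dual K V => φ ↑u = 0 ∧ φ ↑v = 0).card)
        = q * q ^ (n * (s + 1)) + (q ^ k - q) * q ^ (n * s) := fun u hu =>
      hinner1 u (by simpa using (Finset.mem_erase.mp hu).1)
    rw [Finset.sum_congr rfl hother, Finset.sum_const, smul_eq_mul,
      Finset.card_erase_of_mem (mem_univ _), Finset.card_univ, hcardU, hinner0, add_comm]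
  -- the quadratic form
  set f : Module.Dual K V → ℤ := fun φ =>
    ((q : ℤ) ^ n * (m φ : ℤ) - (q : ℤ) ^ k) * ((q : ℤ) ^ n * (m φ : ℤ) - (q : ℤ) ^ (k + 1))
    with hf
  have hf0 : ∀ φ, 0 ≤ f φ := by
    intro φ
    obtain ⟨x, hx, hkx⟩ := hpt φ
    simp only [hf, hx]
    have hxx : (q : ℤ) ^ n * ((q ^ x : ℕ) : ℤ) = (q : ℤ) ^ (n + x) := by
      push_cast
      rw [pow_add]
    rw [hxx]
    rcases eq_or_lt_of_le hkx with h | h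
    · rw [← h, sub_self, zero_mul]
    · have h1 : (q : ℤ) ^ k ≤ (q : ℤ) ^ (n + x) := by
        exact_mod_cast Nat.pow_le_pow_right (by omega) (by omega)
      have h2 : (q : ℤ) ^ (k + 1) ≤ (q : ℤ) ^ (n + x) := by
        exact_mod_cast Nat.pow_le_pow_right (by omega) (by omega)
      exact mul_nonneg (sub_nonneg.mpr h1) (sub_nonneg.mpr h2)
  have hm0 : m 0 = q ^ k := by
    simp only [hm]
    rw [← hcardU, ← Finset.card_univ]
    congr 1
    apply Finset.filter_true_of_mem
    intro v _
    simp
  have hlow : ((q : ℤ) ^ k * ((q : ℤ) ^ n - 1)) * ((q : ℤ) ^ k * ((q : ℤ) ^ n - (q : ℤ)))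
      ≤ ∑ φ : Module.Dual K V, f φ := by
    have h := Finset.single_le_sum (f := f) (fun φ _ => hf0 φ)
      (Finset.mem_univ (0 : Module.Dual K V))
    refine le_trans (le_of_eq ?_) h
    simp only [hf, hm0]
    push_cast
    ring
  -- total sum of the quadratic form
  have hqk1 : (1 : ℕ) ≤ q ^ k := Nat.one_le_pow _ _ (by omega)
  have hqkq : q ≤ q ^ k := by
    calc q = q ^ 1 := (pow_one q).symm
    _ ≤ q ^ k := Nat.pow_le_pow_right (by omega) hk1
  have htot : (∑ φ : Module.Dual K V, f φ)
      = ((q : ℤ) ^ n - 1) * ((q : ℤ) ^ n - (q : ℤ)) * (q : ℤ) ^ (n * (s + 2)) := by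
    have hexp : ∀ φ, f φ = (q : ℤ) ^ n * (q : ℤ) ^ n * ((m φ : ℤ) * (m φ : ℤ))
        - ((q : ℤ) ^ k + (q : ℤ) ^ (k + 1)) * (q : ℤ) ^ n * (m φ : ℤ)
        + (q : ℤ) ^ k * (q : ℤ) ^ (k + 1) := by
      intro φ
      simp only [hf]
      ring
    have c1 : (∑ φ : Module.Dual K V, (m φ : ℤ))
        = ((q ^ (n * (s + 2)) + (q ^ k - 1) * q ^ (n * (s + 1)) : ℕ) : ℤ) := by
      rw [← Nat.cast_sum, hS1]
    have c2 : (∑ φ : Module.Dual K V, (m φ : ℤ) * (m φ : ℤ))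
        = (((q ^ (n * (s + 2)) + (q ^ k - 1) * q ^ (n * (s + 1)))
            + (q ^ k - 1) * (q * q ^ (n * (s + 1)) + (q ^ k - q) * q ^ (n * s)) : ℕ) : ℤ) := by
      rw [show (∑ φ : Module.Dual K V, (m φ : ℤ) * (m φ : ℤ))
          = ((∑ φ : Module.Dual K V, m φ * m φ : ℕ) : ℤ) by push_cast; rfl, hS2]
    calc (∑ φ : Module.Dual K V, f φ)
        = (q : ℤ) ^ n * (q : ℤ) ^ n * (∑ φ : Module.Dual K V, (m φ : ℤ) * (m φ : ℤ))
          - ((q : ℤ) ^ k + (q : ℤ) ^ (k + 1)) * (q : ℤ) ^ n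
              * (∑ φ : Module.Dual K V, (m φ : ℤ))
          + (q : ℤ) ^ k * (q : ℤ) ^ (k + 1) * (q : ℤ) ^ (n * (s + 2)) := by
          rw [Finset.sum_congr rfl fun φ _ => hexp φ]
          rw [Finset.sum_add_distrib, Finset.sum_sub_distrib, ← Finset.mul_sum, ← Finset.mul_sum,
            Finset.sum_const, Finset.card_univ, hcardDual]
          ring
      _ = ((q : ℤ) ^ n - 1) * ((q : ℤ) ^ n - (q : ℤ)) * (q : ℤ) ^ (n * (s + 2)) := by
          rw [c1, c2]
          push_cast [Nat.cast_sub hqk1, Nat.cast_sub hqkq]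
          have p1 : (q : ℤ) ^ (n * (s + 1)) = (q : ℤ) ^ (n * s) * (q : ℤ) ^ n := by
            rw [← pow_add]
            congr 1
          have p2 : (q : ℤ) ^ (n * (s + 2)) = (q : ℤ) ^ (n * s) * (q : ℤ) ^ n * (q : ℤ) ^ n := by
            rw [← pow_add, ← pow_add]
            congr 1
          rw [p1, p2]
          ring
  -- conclude
  have hpos : (0 : ℤ) < ((q : ℤ) ^ n - 1) * ((q : ℤ) ^ n - (q : ℤ)) := by
    have hgrow : q < q ^ n := by
      calc q = q ^ 1 := (pow_one q).symm
      _ < q ^ n := Nat.pow_lt_pow_right (by omega) (by omega)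
    have h1 : (1 : ℤ) < (q : ℤ) ^ n := by exact_mod_cast lt_of_lt_of_le (by omega : 1 < q) hgrow.le
    have h2 : (q : ℤ) < (q : ℤ) ^ n := by exact_mod_cast hgrow
    exact mul_pos (by linarith) (by linarith)
  have hZ : (q : ℤ) ^ (2 * k) ≤ (q : ℤ) ^ (n * (s + 2)) := by
    have h3 := le_trans hlow (le_of_eq htot)
    refine le_of_mul_le_mul_right ?_ hpos
    calc (q : ℤ) ^ (2 * k) * (((q : ℤ) ^ n - 1) * ((q : ℤ) ^ n - (q : ℤ)))
        = ((q : ℤ) ^ k * ((q : ℤ) ^ n - 1)) * ((q : ℤ) ^ k * ((q : ℤ) ^ n - (q : ℤ))) := by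
          rw [two_mul, pow_add]
          ring
      _ ≤ ((q : ℤ) ^ n - 1) * ((q : ℤ) ^ n - (q : ℤ)) * (q : ℤ) ^ (n * (s + 2)) := h3
      _ = (q : ℤ) ^ (n * (s + 2)) * (((q : ℤ) ^ n - 1) * ((q : ℤ) ^ n - (q : ℤ))) := by ring
  have hN : q ^ (2 * k) ≤ q ^ (n * (s + 2)) := by exact_mod_cast hZ
  have hfin : 2 * k ≤ n * (s + 2) := (Nat.pow_le_pow_iff_right (by omega)).mp hN
  rw [hs]
  calc 2 * k ≤ n * (s + 2) := hfin
  _ = (s + 2) * n := Nat.mul_comm _ _
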